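/- arXiv:2405.03214 — 4 statements merged into one kernel-verified Lean document; each statement's English description precedes it below -/
import Mathlib

section
/- Let γ > 1 and v₊ > 0 be given. Then there exists a constant C > 0 such that for any v, v̄ satisfying 0 < v̄ < 2v₊ and 0 < v < 3v₊, one has |v − v̄|² ≤ C·Q(v|v̄) and |v − v̄|² ≤ C·p(v|v̄). -/
open Real

noncomputable section

/-- The pressure `p(v) = v^(-γ)`. -/
def pres (γ v : ℝ) : ℝ := v ^ (-γ)

/-- The internal energy `Q(v) = v^(1-γ)/(γ-1)`. -/
def intE (γ v : ℝ) : ℝ := v ^ (1 - γ) / (γ - 1)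

/-- The relative internal energy `Q(v|v̄) = Q(v) - Q(v̄) - Q'(v̄)(v - v̄)`, using `Q' = -p`. -/
def QRel (γ v w : ℝ) : ℝ := intE γ v - intE γ w + pres γ w * (v - w)

/-- The relative pressure `p(v|v̄) = p(v) - p(v̄) - p'(v̄)(v - v̄)`, using `p'(w) = -γ w^(-γ-1)`. -/
def pRel (γ v w : ℝ) : ℝ := pres γ v - pres γ w + γ * w ^ (-γ - 1) * (v - w)

/-- Tangent line inequality for a convex differentiable function. -/
lemma tangent_le {S : Set ℝ} {g g' : ℝ → ℝ} (hconv : ConvexOn ℝ S g)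
    (hderiv : ∀ x ∈ S, HasDerivAt g (g' x) x) {v w : ℝ} (hv : v ∈ S) (hw : w ∈ S) :
    g' w * (v - w) ≤ g v - g w := by
  rcases lt_trichotomy v w with h | h | h
  · have := hconv.slope_le_of_hasDerivAt hv hw h (hderiv w hw)
    rw [slope_def_field] at this
    have hvw : 0 < w - v := by linarith
    rw [div_le_iff₀ hvw] at this
    nlinarith
  · simp [h]
  · have := hconv.le_slope_of_hasDerivAt hw hv h (hderiv w hw)
    rw [slope_def_field] at this
    have hvw : 0 < v - w := by linarith
    rw [le_div_iff₀ hvw] at this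
    nlinarith

/-- Strong convexity lower bound from a second-derivative bound on an open interval. -/
lemma strong_convex_bound {b m : ℝ} {F F' F'' : ℝ → ℝ}
    (hF' : ∀ x ∈ Set.Ioo (0:ℝ) b, HasDerivAt F (F' x) x)
    (hF'' : ∀ x ∈ Set.Ioo (0:ℝ) b, HasDerivAt F' (F'' x) x)
    (hm : ∀ x ∈ Set.Ioo (0:ℝ) b, m ≤ F'' x)
    {v w : ℝ} (hv : v ∈ Set.Ioo (0:ℝ) b) (hw : w ∈ Set.Ioo (0:ℝ) b) :
    m / 2 * (v - w) ^ 2 ≤ F v - F w - F' w * (v - w) := by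
  set S := Set.Ioo (0:ℝ) b with hS
  have hSopen : IsOpen S := isOpen_Ioo
  set g : ℝ → ℝ := fun x => F x - m / 2 * x ^ 2 with hg
  set g' : ℝ → ℝ := fun x => F' x - m * x with hg'
  have hgderiv : ∀ x ∈ S, HasDerivAt g (g' x) x := by
    intro x hx
    have h1 : HasDerivAt (fun x : ℝ => m / 2 * x ^ 2) (m / 2 * (2 * x)) x := by
      simpa using ((hasDerivAt_pow 2 x).const_mul (m / 2))
    have := (hF' x hx).sub h1
    have h2 := this.congr_deriv (show F' x - m / 2 * (2 * x) = F' x - m * x by ring)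
    exact h2
  have hg'deriv : ∀ x ∈ S, HasDerivAt g' (F'' x - m) x := by
    intro x hx
    have h1 : HasDerivAt (fun x : ℝ => m * x) m x := by
      simpa using (hasDerivAt_id x).const_mul m
    exact (hF'' x hx).sub h1
  have hconv : ConvexOn ℝ S g := by
    refine convexOn_of_hasDerivWithinAt2_nonneg (f' := g') (f'' := fun x => F'' x - m) (convex_Ioo _ _)
      (fun x hx => ((hgderiv x hx).continuousAt).continuousWithinAt)
      (fun x hx => ?_) (fun x hx => ?_) (fun x hx => ?_)
    · rw [hSopen.interior_eq] at hx ⊢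
      exact (hgderiv x hx).hasDerivWithinAt
    · rw [hSopen.interior_eq] at hx ⊢
      exact (hg'deriv x hx).hasDerivWithinAt
    · rw [hSopen.interior_eq] at hx
      simpa using sub_nonneg.mpr (hm x hx)
  have := tangent_le hconv hgderiv hv hw
  simp only [g, g'] at this
  nlinarith [this]

/-- Let `γ > 1` and `v₊ > 0` be given.  Then there exists a constant `C > 0`
such that for any `v, v̄` with `0 < v̄ < 2v₊` and `0 < v < 3v₊`, one has
`|v − v̄|² ≤ C·Q(v|v̄)` and `|v − v̄|² ≤ C·p(v|v̄)`. -/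
theorem relative_quantities_quadratic_lower_bound
    (γ vplus : ℝ) (hγ : 1 < γ) (hvplus : 0 < vplus) :
    ∃ C > 0, ∀ v w : ℝ, 0 < w → w < 2 * vplus → 0 < v → v < 3 * vplus →
      |v - w| ^ 2 ≤ C * QRel γ v w ∧ |v - w| ^ 2 ≤ C * pRel γ v w := by
  set b := 3 * vplus with hb
  have hbpos : 0 < b := by positivity
  have hγ0 : 0 < γ := by linarith
  -- strong convexity constants
  set mQ : ℝ := γ * b ^ (-γ - 1) with hmQ
  set mp : ℝ := γ * (γ + 1) * b ^ (-γ - 2) with hmp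
  have hmQpos : 0 < mQ := by
    have : (0:ℝ) < b ^ (-γ - 1) := Real.rpow_pos_of_pos hbpos _
    positivity
  have hmppos : 0 < mp := by
    have : (0:ℝ) < b ^ (-γ - 2) := Real.rpow_pos_of_pos hbpos _
    positivity
  -- derivatives
  have hQderiv : ∀ x ∈ Set.Ioo (0:ℝ) b, HasDerivAt (intE γ) (-(x ^ (-γ))) x := by
    intro x hx
    have hx0 : x ≠ 0 := ne_of_gt hx.1
    have h := (Real.hasDerivAt_rpow_const (p := 1 - γ) (Or.inl hx0)).div_const (γ - 1)
    have hne : γ - 1 ≠ 0 := by intro h'; rw [sub_eq_zero] at h'; exact (lt_irrefl _ (h' ▸ hγ))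
    have : HasDerivAt (intE γ) ((1 - γ) * x ^ (1 - γ - 1) / (γ - 1)) x := h
    convert this using 1
    rw [show (1:ℝ) - γ - 1 = -γ by ring]
    field_simp
    ring
  have hQ'deriv : ∀ x ∈ Set.Ioo (0:ℝ) b, HasDerivAt (fun x : ℝ => -(x ^ (-γ))) (γ * x ^ (-γ - 1)) x := by
    intro x hx
    have hx0 : x ≠ 0 := ne_of_gt hx.1
    have h := (Real.hasDerivAt_rpow_const (p := -γ) (Or.inl hx0)).neg
    refine h.congr_deriv ?_
    ring
  have hpderiv : ∀ x ∈ Set.Ioo (0:ℝ) b, HasDerivAt (pres γ) (-γ * x ^ (-γ - 1)) x := by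
    intro x hx
    have hx0 : x ≠ 0 := ne_of_gt hx.1
    exact Real.hasDerivAt_rpow_const (p := -γ) (Or.inl hx0)
  have hp'deriv : ∀ x ∈ Set.Ioo (0:ℝ) b,
      HasDerivAt (fun x : ℝ => -γ * x ^ (-γ - 1)) (γ * (γ + 1) * x ^ (-γ - 2)) x := by
    intro x hx
    have hx0 : x ≠ 0 := ne_of_gt hx.1
    have h := (Real.hasDerivAt_rpow_const (p := -γ - 1) (Or.inl hx0)).const_mul (-γ)
    refine h.congr_deriv ?_
    rw [show -γ - 1 - 1 = -γ - 2 by ring]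
    ring
  -- second derivative lower bounds
  have hQ'' : ∀ x ∈ Set.Ioo (0:ℝ) b, mQ ≤ γ * x ^ (-γ - 1) := by
    intro x hx
    have := Real.rpow_le_rpow_of_nonpos hx.1 hx.2.le (by linarith : -γ - 1 ≤ 0)
    exact mul_le_mul_of_nonneg_left this hγ0.le
  have hp'' : ∀ x ∈ Set.Ioo (0:ℝ) b, mp ≤ γ * (γ + 1) * x ^ (-γ - 2) := by
    intro x hx
    have := Real.rpow_le_rpow_of_nonpos hx.1 hx.2.le (by linarith : -γ - 2 ≤ 0)
    exact mul_le_mul_of_nonneg_left this (by positivity)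
  refine ⟨max (2 / mQ) (2 / mp), lt_max_of_lt_left (by positivity), ?_⟩
  intro v w hw0 hw2 hv0 hv3
  have hv : v ∈ Set.Ioo (0:ℝ) b := ⟨hv0, hv3⟩
  have hw : w ∈ Set.Ioo (0:ℝ) b := ⟨hw0, by simp only [hb]; linarith⟩
  have hQbound := strong_convex_bound hQderiv hQ'deriv hQ'' hv hw
  have hpbound := strong_convex_bound hpderiv hp'deriv hp'' hv hw
  have hQRel : mQ / 2 * (v - w) ^ 2 ≤ QRel γ v w := by
    have : QRel γ v w = intE γ v - intE γ w - (-(w ^ (-γ))) * (v - w) := by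
      simp only [QRel, pres]; ring
    rw [this]; exact hQbound
  have hpRel : mp / 2 * (v - w) ^ 2 ≤ pRel γ v w := by
    have : pRel γ v w = pres γ v - pres γ w - (-γ * w ^ (-γ - 1)) * (v - w) := by
      simp only [pRel]; ring
    rw [this]; exact hpbound
  have hsq : |v - w| ^ 2 = (v - w) ^ 2 := sq_abs _
  constructor
  · rw [hsq]
    calc (v - w) ^ 2 = (2 / mQ) * (mQ / 2 * (v - w) ^ 2) := by field_simp
      _ ≤ (2 / mQ) * QRel γ v w := by
          exact mul_le_mul_of_nonneg_left hQRel (by positivity)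
      _ ≤ max (2 / mQ) (2 / mp) * QRel γ v w := by
          have hQ0 : 0 ≤ QRel γ v w := le_trans (by positivity) hQRel
          exact mul_le_mul_of_nonneg_right (le_max_left _ _) hQ0
  · rw [hsq]
    calc (v - w) ^ 2 = (2 / mp) * (mp / 2 * (v - w) ^ 2) := by field_simp
      _ ≤ (2 / mp) * pRel γ v w := by
          exact mul_le_mul_of_nonneg_left hpRel (by positivity)
      _ ≤ max (2 / mQ) (2 / mp) * pRel γ v w := by
          have hp0 : 0 ≤ pRel γ v w := le_trans (by positivity) hpRel
          exact mul_le_mul_of_nonneg_right (le_max_right _ _) hp0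
end
end

section
/- Let γ > 1 and v₊ > 0 be given. Then there exist constants C > 0 and δ* > 0 such that for any 0 < δ < δ* and any v, v̄ > 0 satisfying |p(v) − p(v̄)| < δ and |p(v̄) − p(v₊)| < δ, the following three inequalities hold: (i) p(v|v̄) ≤ ((γ+1)/(2γ p(v̄)) + Cδ)|p(v) − p(v̄)|²; (ii) Q(v|v̄) ≥ (p(v̄)^{−1/γ−1}/(2γ))|p(v) − p(v̄)|² − ((1+γ)/(3γ²)) p(v̄)^{−1/γ−2}(p(v) − p(v̄))³; (iii) Q(v|v̄) ≤ (p(v̄)^{−1/γ−1}/(2γ) + Cδ)|p(v) − p(v̄)|². -/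
open Real

noncomputable section

open Set

set_option maxHeartbeats 1000000


section helpers
variable {φ ψ φ' ψ' : ℝ → ℝ} {c d : ℝ}

lemma comp_right
    (hφ : ∀ u ∈ Icc c d, HasDerivAt φ (φ' u) u)
    (hψ : ∀ u ∈ Icc c d, HasDerivAt ψ (ψ' u) u)
    (hle : ∀ u ∈ Icc c d, φ' u ≤ ψ' u)
    (heq : φ c ≤ ψ c) :
    ∀ u ∈ Icc c d, φ u ≤ ψ u := by
  intro u hu
  have hmono : MonotoneOn (fun x => ψ x - φ x) (Icc c d) := by
    apply monotoneOn_of_deriv_nonneg (convex_Icc c d)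
    · exact fun x hx => ((hψ x hx).sub (hφ x hx)).continuousAt.continuousWithinAt
    · intro x hx
      rw [interior_Icc] at hx
      exact (((hψ x (Ioo_subset_Icc_self hx)).sub (hφ x (Ioo_subset_Icc_self hx))).differentiableAt).differentiableWithinAt
    · intro x hx
      rw [interior_Icc] at hx
      rw [(show HasDerivAt (fun x => ψ x - φ x) (ψ' x - φ' x) x from (hψ x (Ioo_subset_Icc_self hx)).sub (hφ x (Ioo_subset_Icc_self hx))).deriv]
      exact sub_nonneg.2 (hle x (Ioo_subset_Icc_self hx))
  have hc : c ∈ Icc c d := ⟨le_rfl, hu.1.trans hu.2⟩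
  have := hmono hc hu hu.1
  simp only at this
  linarith

lemma comp_left
    (hφ : ∀ u ∈ Icc c d, HasDerivAt φ (φ' u) u)
    (hψ : ∀ u ∈ Icc c d, HasDerivAt ψ (ψ' u) u)
    (hle : ∀ u ∈ Icc c d, ψ' u ≤ φ' u)
    (heq : φ d ≤ ψ d) :
    ∀ u ∈ Icc c d, φ u ≤ ψ u := by
  intro u hu
  have hmono : AntitoneOn (fun x => ψ x - φ x) (Icc c d) := by
    apply antitoneOn_of_deriv_nonpos (convex_Icc c d)
    · exact fun x hx => ((hψ x hx).sub (hφ x hx)).continuousAt.continuousWithinAt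
    · intro x hx
      rw [interior_Icc] at hx
      exact (((hψ x (Ioo_subset_Icc_self hx)).sub (hφ x (Ioo_subset_Icc_self hx))).differentiableAt).differentiableWithinAt
    · intro x hx
      rw [interior_Icc] at hx
      rw [(show HasDerivAt (fun x => ψ x - φ x) (ψ' x - φ' x) x from (hψ x (Ioo_subset_Icc_self hx)).sub (hφ x (Ioo_subset_Icc_self hx))).deriv]
      exact sub_nonpos.2 (hle x (Ioo_subset_Icc_self hx))
  have hd : d ∈ Icc c d := ⟨hu.1.trans hu.2, le_rfl⟩
  have := hmono hu hd hu.2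
  simp only at this
  linarith

end helpers


lemma taylor3_upper {φ φ₁ φ₂ φ₃ : ℝ → ℝ} {A M : ℝ}
    (hd0 : ∀ u ∈ Icc (1/2:ℝ) (3/2), HasDerivAt φ (φ₁ u) u)
    (hd1 : ∀ u ∈ Icc (1/2:ℝ) (3/2), HasDerivAt φ₁ (φ₂ u) u)
    (hd2 : ∀ u ∈ Icc (1/2:ℝ) (3/2), HasDerivAt φ₂ (φ₃ u) u)
    (h0 : φ 1 = 0) (h1 : φ₁ 1 = 0) (h2 : φ₂ 1 = A)
    (hM : ∀ u ∈ Icc (1/2:ℝ) (3/2), |φ₃ u| ≤ M) :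
    ∀ u ∈ Icc (1/2:ℝ) (3/2), φ u ≤ A/2*(u-1)^2 + M/6*|u-1|^3 := by
  intro u hu
  have hone : (1:ℝ) ∈ Icc (1/2:ℝ) (3/2) := by norm_num
  rcases le_total 1 u with h1u | h1u
  · -- right side, work on Icc 1 (3/2)
    have hsub : Icc (1:ℝ) (3/2) ⊆ Icc (1/2:ℝ) (3/2) := Icc_subset_Icc (by norm_num) le_rfl
    have st3 : ∀ x ∈ Icc (1:ℝ) (3/2), φ₂ x ≤ A + M*(x-1) := by
      apply comp_right (φ' := φ₃) (ψ' := fun _ => M)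
      · exact fun x hx => hd2 x (hsub hx)
      · intro x hx
        have : HasDerivAt (fun y : ℝ => A + M*(y-1)) (M*1) x :=
          (((hasDerivAt_id' x).sub_const 1).const_mul M).const_add A
        simpa using this
      · exact fun x hx => (abs_le.1 (hM x (hsub hx))).2
      · simp [h2]
    have st2 : ∀ x ∈ Icc (1:ℝ) (3/2), φ₁ x ≤ A*(x-1) + M/2*(x-1)^2 := by
      apply comp_right (φ' := φ₂) (ψ' := fun x => A + M*(x-1))
      · exact fun x hx => hd1 x (hsub hx)
      · intro x hx
        have h := (hasDerivAt_id' x).sub_const 1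
        have := (h.const_mul A).add ((h.pow 2).const_mul (M/2))
        exact this.congr_deriv (by ring)
      · exact st3
      · simp [h1]
    have st1 : ∀ x ∈ Icc (1:ℝ) (3/2), φ x ≤ A/2*(x-1)^2 + M/6*(x-1)^3 := by
      apply comp_right (φ' := φ₁) (ψ' := fun x => A*(x-1) + M/2*(x-1)^2)
      · exact fun x hx => hd0 x (hsub hx)
      · intro x hx
        have h := (hasDerivAt_id' x).sub_const 1
        have := ((h.pow 2).const_mul (A/2)).add ((h.pow 3).const_mul (M/6))
        exact this.congr_deriv (by ring)
      · exact st2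
      · simp [h0]
    have := st1 u ⟨h1u, hu.2⟩
    rw [abs_of_nonneg (by linarith : (0:ℝ) ≤ u - 1)]
    linarith
  · -- left side, on Icc (1/2) 1
    have hsub : Icc (1/2:ℝ) 1 ⊆ Icc (1/2:ℝ) (3/2) := Icc_subset_Icc le_rfl (by norm_num)
    have st3 : ∀ x ∈ Icc (1/2:ℝ) 1, φ₂ x ≤ A + M*(1-x) := by
      apply comp_left (φ' := φ₃) (ψ' := fun _ => -M)
      · exact fun x hx => hd2 x (hsub hx)
      · intro x hx
        have : HasDerivAt (fun y : ℝ => A + M*(1-y)) (M*(-1)) x :=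
          (((hasDerivAt_id' x).const_sub 1).const_mul M).const_add A
        simpa using this
      · exact fun x hx => (abs_le.1 (hM x (hsub hx))).1
      · simp [h2]
    have st2 : ∀ x ∈ Icc (1/2:ℝ) 1, A*(x-1) - M/2*(x-1)^2 ≤ φ₁ x := by
      have := comp_left (φ := fun x => A*(x-1) - M/2*(x-1)^2) (ψ := φ₁)
        (φ' := fun x => A + M*(1-x)) (ψ' := φ₂)
        (fun x hx => by
          have h := (hasDerivAt_id' x).sub_const 1
          have := (h.const_mul A).sub ((h.pow 2).const_mul (M/2))
          exact this.congr_deriv (by ring))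
        (fun x hx => hd1 x (hsub hx)) st3 (by simp [h1])
      exact this
    have st1 : ∀ x ∈ Icc (1/2:ℝ) 1, φ x ≤ A/2*(x-1)^2 - M/6*(x-1)^3 := by
      apply comp_left (φ' := φ₁) (ψ' := fun x => A*(x-1) - M/2*(x-1)^2)
      · exact fun x hx => hd0 x (hsub hx)
      · intro x hx
        have h := (hasDerivAt_id' x).sub_const 1
        have := ((h.pow 2).const_mul (A/2)).sub ((h.pow 3).const_mul (M/6))
        exact this.congr_deriv (by ring)
      · exact st2
      · simp [h0]
    have := st1 u ⟨hu.1, h1u⟩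
    rw [abs_of_nonpos (by linarith : u - 1 ≤ 0)]
    have : φ u ≤ A/2*(u-1)^2 - M/6*(u-1)^3 := this
    nlinarith [this]

lemma taylor4_lower {φ φ₁ φ₂ φ₃ φ₄ : ℝ → ℝ} {A B : ℝ}
    (hd0 : ∀ u ∈ Icc (1/2:ℝ) (3/2), HasDerivAt φ (φ₁ u) u)
    (hd1 : ∀ u ∈ Icc (1/2:ℝ) (3/2), HasDerivAt φ₁ (φ₂ u) u)
    (hd2 : ∀ u ∈ Icc (1/2:ℝ) (3/2), HasDerivAt φ₂ (φ₃ u) u)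
    (hd3 : ∀ u ∈ Icc (1/2:ℝ) (3/2), HasDerivAt φ₃ (φ₄ u) u)
    (h0 : φ 1 = 0) (h1 : φ₁ 1 = 0) (h2 : φ₂ 1 = A) (h3 : φ₃ 1 = B)
    (h4 : ∀ u ∈ Icc (1/2:ℝ) (3/2), 0 ≤ φ₄ u) :
    ∀ u ∈ Icc (1/2:ℝ) (3/2), A/2*(u-1)^2 + B/6*(u-1)^3 ≤ φ u := by
  intro u hu
  rcases le_total 1 u with h1u | h1u
  · have hsub : Icc (1:ℝ) (3/2) ⊆ Icc (1/2:ℝ) (3/2) := Icc_subset_Icc (by norm_num) le_rfl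
    have s3 : ∀ x ∈ Icc (1:ℝ) (3/2), B ≤ φ₃ x := by
      apply comp_right (φ' := fun _ => (0:ℝ)) (ψ' := φ₄)
      · exact fun x hx => hasDerivAt_const x B
      · exact fun x hx => hd3 x (hsub hx)
      · exact fun x hx => h4 x (hsub hx)
      · simp [h3]
    have s2 : ∀ x ∈ Icc (1:ℝ) (3/2), A + B*(x-1) ≤ φ₂ x := by
      apply comp_right (φ' := fun _ => B) (ψ' := φ₃)
      · intro x hx
        have : HasDerivAt (fun y : ℝ => A + B*(y-1)) (B*1) x :=
          (((hasDerivAt_id' x).sub_const 1).const_mul B).const_add A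
        simpa using this
      · exact fun x hx => hd2 x (hsub hx)
      · exact s3
      · simp [h2]
    have s1 : ∀ x ∈ Icc (1:ℝ) (3/2), A*(x-1) + B/2*(x-1)^2 ≤ φ₁ x := by
      apply comp_right (φ' := fun x => A + B*(x-1)) (ψ' := φ₂)
      · intro x hx
        have h := (hasDerivAt_id' x).sub_const 1
        have := (h.const_mul A).add ((h.pow 2).const_mul (B/2))
        exact this.congr_deriv (by ring)
      · exact fun x hx => hd1 x (hsub hx)
      · exact s2
      · simp [h1]
    have s0 : ∀ x ∈ Icc (1:ℝ) (3/2), A/2*(x-1)^2 + B/6*(x-1)^3 ≤ φ x := by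
      apply comp_right (φ' := fun x => A*(x-1) + B/2*(x-1)^2) (ψ' := φ₁)
      · intro x hx
        have h := (hasDerivAt_id' x).sub_const 1
        have := ((h.pow 2).const_mul (A/2)).add ((h.pow 3).const_mul (B/6))
        exact this.congr_deriv (by ring)
      · exact fun x hx => hd0 x (hsub hx)
      · exact s1
      · simp [h0]
    exact s0 u ⟨h1u, hu.2⟩
  · have hsub : Icc (1/2:ℝ) 1 ⊆ Icc (1/2:ℝ) (3/2) := Icc_subset_Icc le_rfl (by norm_num)
    have s3 : ∀ x ∈ Icc (1/2:ℝ) 1, φ₃ x ≤ B := by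
      apply comp_left (φ' := φ₄) (ψ' := fun _ => (0:ℝ))
      · exact fun x hx => hd3 x (hsub hx)
      · exact fun x hx => hasDerivAt_const x B
      · exact fun x hx => h4 x (hsub hx)
      · simp [h3]
    have s2 : ∀ x ∈ Icc (1/2:ℝ) 1, A + B*(x-1) ≤ φ₂ x := by
      apply comp_left (φ := fun x => A + B*(x-1)) (ψ := φ₂) (φ' := fun _ => B) (ψ' := φ₃)
      · intro x hx
        have : HasDerivAt (fun y : ℝ => A + B*(y-1)) (B*1) x :=
          (((hasDerivAt_id' x).sub_const 1).const_mul B).const_add A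
        simpa using this
      · exact fun x hx => hd2 x (hsub hx)
      · exact s3
      · simp [h2]
    have s1 : ∀ x ∈ Icc (1/2:ℝ) 1, φ₁ x ≤ A*(x-1) + B/2*(x-1)^2 := by
      apply comp_left (φ' := φ₂) (ψ' := fun x => A + B*(x-1))
      · exact fun x hx => hd1 x (hsub hx)
      · intro x hx
        have h := (hasDerivAt_id' x).sub_const 1
        have := (h.const_mul A).add ((h.pow 2).const_mul (B/2))
        exact this.congr_deriv (by ring)
      · exact s2
      · simp [h1]
    have s0 : ∀ x ∈ Icc (1/2:ℝ) 1, A/2*(x-1)^2 + B/6*(x-1)^3 ≤ φ x := by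
      apply comp_left (φ := fun x => A/2*(x-1)^2 + B/6*(x-1)^3) (ψ := φ)
        (φ' := fun x => A*(x-1) + B/2*(x-1)^2) (ψ' := φ₁)
      · intro x hx
        have h := (hasDerivAt_id' x).sub_const 1
        have := ((h.pow 2).const_mul (A/2)).add ((h.pow 3).const_mul (B/6))
        exact this.congr_deriv (by ring)
      · exact fun x hx => hd0 x (hsub hx)
      · exact s1
      · simp [h0]
    exact s0 u ⟨hu.1, h1u⟩


-- generic two-term rpow derivative
lemma hd2term (c₁ e₁ c₂ e₂ d₁ d₂ f₁ f₂ : ℝ) {u : ℝ} (hu : 0 < u)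
    (h₁ : d₁ = c₁*e₁) (h₂ : d₂ = c₂*e₂) (g₁ : f₁ = e₁ - 1) (g₂ : f₂ = e₂ - 1) :
    HasDerivAt (fun x : ℝ => c₁ * x ^ e₁ + c₂ * x ^ e₂) (d₁ * u ^ f₁ + d₂ * u ^ f₂) u := by
  have := ((Real.hasDerivAt_rpow_const (x := u) (p := e₁) (Or.inl hu.ne')).const_mul c₁).add
    ((Real.hasDerivAt_rpow_const (x := u) (p := e₂) (Or.inl hu.ne')).const_mul c₂)
  rw [h₁, h₂, g₁, g₂]; exact this.congr_deriv (by ring)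

lemma rpow_win {u e b : ℝ} (hu : u ∈ Icc (1/2:ℝ) (3/2)) (he1 : -b ≤ e) (he2 : e ≤ 0)
    (hb : 0 ≤ b) : u ^ e ≤ 2 ^ b := by
  have h0 : (0:ℝ) < 1/2 := by norm_num
  have h1 : u ^ e ≤ (1/2:ℝ) ^ e := Real.rpow_le_rpow_of_nonpos h0 hu.1 he2
  have h2 : (1/2:ℝ) ^ e ≤ (1/2:ℝ) ^ (-b) := Real.rpow_le_rpow_of_exponent_ge h0 (by norm_num) he1
  have h3 : (1/2:ℝ) ^ (-b) = 2 ^ b := by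
    rw [Real.rpow_neg (by norm_num), one_div,
      Real.inv_rpow (by norm_num : (0:ℝ) ≤ 2), inv_inv]
  linarith



section FG
variable {β : ℝ}

lemma rpow_win3 {u e : ℝ} (hu : u ∈ Icc (1/2:ℝ) (3/2)) (he1 : -3 ≤ e) (he2 : e ≤ 0) :
    u ^ e ≤ 8 := by
  have h := rpow_win hu (by linarith : -(3:ℝ) ≤ e) he2 (by norm_num)
  rw [show ((3:ℝ)) = ((3:ℕ):ℝ) by norm_num, Real.rpow_natCast] at h
  norm_num at h; exact h

lemma rpow_win4 {u e : ℝ} (hu : u ∈ Icc (1/2:ℝ) (3/2)) (he1 : -4 ≤ e) (he2 : e ≤ 0) :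
    u ^ e ≤ 16 := by
  have h := rpow_win hu (by linarith : -(4:ℝ) ≤ e) he2 (by norm_num)
  rw [show ((4:ℝ)) = ((4:ℕ):ℝ) by norm_num, Real.rpow_natCast] at h
  norm_num at h; exact h

lemma upos {u : ℝ} (hu : u ∈ Icc (1/2:ℝ) (3/2)) : 0 < u := lt_of_lt_of_le (by norm_num) hu.1

lemma F_est (hβ0 : 0 < β) (hβ1 : β < 1) : ∀ u ∈ Icc (1/2:ℝ) (3/2),
    u - 1 + β⁻¹ * (u ^ (-β) - 1) ≤ (β+1)/2*(u-1)^2 + 112/6*|u-1|^3 := by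
  apply taylor3_upper (φ₁ := fun x => 1 - x ^ (-β-1)) (φ₂ := fun x => (β+1) * x ^ (-β-2))
    (φ₃ := fun x => (-((β+1)*(β+2))) * x ^ (-β-3))
  · intro x hx
    have hx0 := upos hx
    have := ((hasDerivAt_id' x).sub_const 1).add
      (((Real.hasDerivAt_rpow_const (x := x) (p := -β) (Or.inl hx0.ne')).sub_const 1).const_mul β⁻¹)
    refine this.congr_deriv ?_
    field_simp
    ring
  · intro x hx
    have hx0 := upos hx
    have := (Real.hasDerivAt_rpow_const (x := x) (p := -β-1) (Or.inl hx0.ne')).const_sub 1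
    refine this.congr_deriv ?_
    rw [show -β-1-1 = -β-2 by ring]; ring
  · intro x hx
    have hx0 := upos hx
    have := (Real.hasDerivAt_rpow_const (x := x) (p := -β-2) (Or.inl hx0.ne')).const_mul (β+1)
    refine this.congr_deriv ?_
    rw [show -β-2-1 = -β-3 by ring]; ring
  · simp
  · simp
  · simp
  · intro x hx
    have hx0 := upos hx
    have h1 : (0:ℝ) < x ^ (-β-3) := Real.rpow_pos_of_pos hx0 _
    have h2 : x ^ (-β-3) ≤ 16 := rpow_win4 hx (by linarith) (by linarith)
    have hc : (0:ℝ) < (β+1)*(β+2) := by nlinarith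
    have t2 : (β+1)*(β+2) * x ^ (-β-3) ≤ 96 := by
      nlinarith [mul_le_mul (show (β+1)*(β+2) ≤ 6 by nlinarith) h2 h1.le (by norm_num : (0:ℝ) ≤ 6)]
    rw [abs_of_nonpos (by nlinarith [mul_pos hc h1])]
    nlinarith [t2]

lemma hdG0 (hβ1 : β < 1) : ∀ u ∈ Icc (1/2:ℝ) (3/2),
    HasDerivAt (fun x : ℝ => β/(1-β) * x ^ (1-β) + x ^ (-β) - (β/(1-β) + 1))
      (β * u ^ (-β) + (-β) * u ^ (-β-1)) u := by
  intro x hx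
  have hx0 := upos hx
  have := (((Real.hasDerivAt_rpow_const (x := x) (p := 1-β) (Or.inl hx0.ne')).const_mul
    (β/(1-β))).add (Real.hasDerivAt_rpow_const (x := x) (p := -β) (Or.inl hx0.ne'))).sub_const
    (β/(1-β) + 1)
  refine this.congr_deriv ?_
  rw [show 1-β-1 = -β by ring, show -β-1 = -β-1 by ring]
  have : (1:ℝ) - β ≠ 0 := by linarith
  field_simp

lemma hdG1 : ∀ u ∈ Icc (1/2:ℝ) (3/2),
    HasDerivAt (fun x : ℝ => β * x ^ (-β) + (-β) * x ^ (-β-1))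
      ((-(β^2)) * u ^ (-β-1) + (β*(β+1)) * u ^ (-β-2)) u := fun x hx =>
  hd2term β (-β) (-β) (-β-1) _ _ _ _ (upos hx) (by ring) (by ring) rfl (by ring)

lemma hdG2 : ∀ u ∈ Icc (1/2:ℝ) (3/2),
    HasDerivAt (fun x : ℝ => (-(β^2)) * x ^ (-β-1) + (β*(β+1)) * x ^ (-β-2))
      ((β^2*(β+1)) * u ^ (-β-2) + (-(β*(β+1)*(β+2))) * u ^ (-β-3)) u := fun x hx =>
  hd2term (-(β^2)) (-β-1) (β*(β+1)) (-β-2) _ _ _ _ (upos hx) (by ring) (by ring) (by ring) (by ring)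

lemma hdG3 : ∀ u ∈ Icc (1/2:ℝ) (3/2),
    HasDerivAt (fun x : ℝ => (β^2*(β+1)) * x ^ (-β-2) + (-(β*(β+1)*(β+2))) * x ^ (-β-3))
      ((-(β^2*(β+1)*(β+2))) * u ^ (-β-3) + (β*(β+1)*(β+2)*(β+3)) * u ^ (-β-4)) u := fun x hx =>
  hd2term (β^2*(β+1)) (-β-2) (-(β*(β+1)*(β+2))) (-β-3) _ _ _ _ (upos hx) (by ring) (by ring)
    (by ring) (by ring)

lemma G_upper (hβ0 : 0 < β) (hβ1 : β < 1) : ∀ u ∈ Icc (1/2:ℝ) (3/2),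
    β/(1-β) * u ^ (1-β) + u ^ (-β) - (β/(1-β) + 1) ≤ β/2*(u-1)^2 + 112/6*|u-1|^3 := by
  apply taylor3_upper (φ₁ := fun x => β * x ^ (-β) + (-β) * x ^ (-β-1))
    (φ₂ := fun x => (-(β^2)) * x ^ (-β-1) + (β*(β+1)) * x ^ (-β-2))
    (φ₃ := fun x => (β^2*(β+1)) * x ^ (-β-2) + (-(β*(β+1)*(β+2))) * x ^ (-β-3))
    (hdG0 hβ1) hdG1 hdG2
  · simp
  · simp
  · simp; ring
  · intro x hx
    have hx0 := upos hx
    have h1 : (0:ℝ) < x ^ (-β-2) := Real.rpow_pos_of_pos hx0 _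
    have h2 : x ^ (-β-2) ≤ 8 := rpow_win3 hx (by linarith) (by linarith)
    have h3 : (0:ℝ) < x ^ (-β-3) := Real.rpow_pos_of_pos hx0 _
    have h4 : x ^ (-β-3) ≤ 16 := rpow_win4 hx (by linarith) (by linarith)
    have hb1 : β^2*(β+1) ≤ 2 := by nlinarith
    have hb2 : β*(β+1)*(β+2) ≤ 6 := by nlinarith
    have t1 : β^2*(β+1) * x ^ (-β-2) ≤ 16 := by
      nlinarith [mul_le_mul hb1 h2 h1.le (by norm_num : (0:ℝ) ≤ 2)]
    have t1' : (0:ℝ) ≤ β^2*(β+1) * x ^ (-β-2) :=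
      mul_nonneg (by nlinarith) h1.le
    have t2 : β*(β+1)*(β+2) * x ^ (-β-3) ≤ 96 := by
      nlinarith [mul_le_mul hb2 h4 h3.le (by norm_num : (0:ℝ) ≤ 6)]
    have t2' : (0:ℝ) ≤ β*(β+1)*(β+2) * x ^ (-β-3) :=
      mul_nonneg (by nlinarith) h3.le
    rw [abs_le]
    constructor <;> nlinarith [t1, t2, t1', t2']

lemma G_lower (hβ0 : 0 < β) (hβ1 : β < 1) : ∀ u ∈ Icc (1/2:ℝ) (3/2),
    β/2*(u-1)^2 - β*(β+1)/3*(u-1)^3 ≤ β/(1-β) * u ^ (1-β) + u ^ (-β) - (β/(1-β) + 1) := by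
  have h := taylor4_lower (A := β) (B := -(2*β*(β+1)))
    (φ := fun x : ℝ => β/(1-β) * x ^ (1-β) + x ^ (-β) - (β/(1-β) + 1))
    (φ₁ := fun x => β * x ^ (-β) + (-β) * x ^ (-β-1))
    (φ₂ := fun x => (-(β^2)) * x ^ (-β-1) + (β*(β+1)) * x ^ (-β-2))
    (φ₃ := fun x => (β^2*(β+1)) * x ^ (-β-2) + (-(β*(β+1)*(β+2))) * x ^ (-β-3))
    (φ₄ := fun x => (-(β^2*(β+1)*(β+2))) * x ^ (-β-3) + (β*(β+1)*(β+2)*(β+3)) * x ^ (-β-4))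
    (hdG0 hβ1) hdG1 hdG2 hdG3 (by simp) (by simp) (by simp; ring) (by simp; ring) ?_
  · intro u hu
    have := h u hu
    nlinarith [this]
  · intro x hx
    have hx0 := upos hx
    have h3 : (0:ℝ) < x ^ (-β-4) := Real.rpow_pos_of_pos hx0 _
    have hx34 : x ^ (-β-3) = x ^ (-β-4) * x := by
      rw [show (-β-3 : ℝ) = (-β-4) + 1 by ring, Real.rpow_add hx0, Real.rpow_one]
    show (0:ℝ) ≤ -(β ^ 2 * (β + 1) * (β + 2)) * x ^ (-β - 3)
        + β * (β + 1) * (β + 2) * (β + 3) * x ^ (-β - 4)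
    rw [hx34]
    have hxx : x ≤ 3/2 := hx.2
    nlinarith [mul_nonneg (mul_nonneg (show (0:ℝ) ≤ β*(β+1)*(β+2) by positivity) h3.le)
      (show (0:ℝ) ≤ β+3-β*x by nlinarith)]

end FG

/-- Let `γ > 1` and `v₊ > 0` be given.  Then there exist constants `C > 0` and
`δ* > 0` such that for any `0 < δ < δ*` and any `v, v̄ > 0` satisfying `|p(v) − p(v̄)| < δ`
and `|p(v̄) − p(v₊)| < δ`, the three stated inequalities hold. -/
theorem relative_quantities_sharp_estimates
    (γ vplus : ℝ) (hγ : 1 < γ) (hvplus : 0 < vplus) :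
    ∃ C > 0, ∃ δstar > 0, ∀ δ : ℝ, 0 < δ → δ < δstar → ∀ v w : ℝ, 0 < v → 0 < w →
      |pres γ v - pres γ w| < δ → |pres γ w - pres γ vplus| < δ →
      (pRel γ v w ≤ ((γ + 1) / (2 * γ * pres γ w) + C * δ) * |pres γ v - pres γ w| ^ 2) ∧
      (QRel γ v w ≥ (pres γ w ^ (-1/γ - 1)) / (2 * γ) * |pres γ v - pres γ w| ^ 2
          - (1 + γ) / (3 * γ ^ 2) * pres γ w ^ (-1/γ - 2)
              * (pres γ v - pres γ w) ^ 3) ∧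
      (QRel γ v w ≤ ((pres γ w ^ (-1/γ - 1)) / (2 * γ) + C * δ)
          * |pres γ v - pres γ w| ^ 2) := by
  have hγ0 : (0:ℝ) < γ := by linarith
  have hβ0 : (0:ℝ) < 1/γ := by positivity
  have hβ1 : 1/γ < 1 := by rw [div_lt_one hγ0]; exact hγ
  have hpp0 : 0 < pres γ vplus := by unfold pres; positivity
  set pp := pres γ vplus with hppdef
  set C : ℝ := 38/pp^2 + 19*(pp/2)^(-1/γ-2) with hCdef
  have hCpos : 0 < C := by rw [hCdef]; positivity
  refine ⟨C, hCpos, pp/4, by positivity, ?_⟩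
  intro δ hδ0 hδs v w hv hw hpv hpw
  set p := pres γ v with hpdef
  set q := pres γ w with hqdef
  have hp0 : 0 < p := by rw [hpdef]; unfold pres; positivity
  have hq0 : 0 < q := by rw [hqdef]; unfold pres; positivity
  have hqlow : 3*pp/4 < q := by
    have h := (abs_lt.1 hpw).1
    linarith
  set u := p / q with hudef
  have hu0 : 0 < u := div_pos hp0 hq0
  have hpu : p = q * u := by rw [hudef]; field_simp
  have hpq : p - q = q * (u - 1) := by rw [hpu]; ring
  have hqs : q * |u - 1| < δ := by
    have h : |p - q| = q * |u-1| := by rw [hpq, abs_mul, abs_of_pos hq0]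
    rw [h] at hpv; exact hpv
  have hs3 : |u - 1| < 1/3 := by
    nlinarith only [abs_nonneg (u-1), hqs, hqlow, hδs, hpp0, hδ0]
  have huI : u ∈ Set.Icc (1/2:ℝ) (3/2) := by
    have h := abs_lt.1 hs3
    constructor <;> [linarith; linarith]
  -- key substitution identities
  have hvw : v = w * u ^ (-(1/γ)) := by
    have h1 : u = (v/w) ^ (-γ) := by
      rw [Real.div_rpow hv.le hw.le, hudef, hpdef, hqdef]
      rfl
    rw [h1, ← Real.rpow_mul (div_nonneg hv.le hw.le),
      show (-γ)*(-(1/γ)) = 1 by field_simp, Real.rpow_one]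
    field_simp
  have hw1 : w ^ (-γ-1) * w = q := by
    rw [hqdef]
    show w ^ (-γ-1) * w = w ^ (-γ)
    calc w ^ (-γ-1) * w = w ^ (-γ-1) * w ^ (1:ℝ) := by rw [Real.rpow_one]
      _ = w ^ (-γ-1+1) := (Real.rpow_add hw _ _).symm
      _ = w ^ (-γ) := by congr 1; ring
  have hw2 : w ^ (-γ) * w = w ^ (1-γ) := by
    calc w ^ (-γ) * w = w ^ (-γ) * w ^ (1:ℝ) := by rw [Real.rpow_one]
      _ = w ^ (-γ+1) := (Real.rpow_add hw _ _).symm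
      _ = w ^ (1-γ) := by congr 1; ring
  have hpRel : pRel γ v w = q * (u - 1 + (1/γ)⁻¹ * (u ^ (-(1/γ)) - 1)) := by
    unfold pRel
    rw [← hpdef, ← hqdef, hpu, hvw,
      show γ * w^(-γ-1) * (w * u ^ (-(1/γ)) - w)
        = γ * (w^(-γ-1)*w) * (u ^ (-(1/γ)) - 1) by ring, hw1,
      show (1/γ)⁻¹ = γ by rw [one_div, inv_inv]]
    ring
  have hWq : (0:ℝ) < q ^ ((1:ℝ)-1/γ) := Real.rpow_pos_of_pos hq0 _
  have hK5 : q ^ ((1:ℝ)-1/γ) = w ^ (1-γ) := by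
    rw [hqdef]
    show (w ^ (-γ)) ^ ((1:ℝ)-1/γ) = w ^ (1-γ)
    rw [← Real.rpow_mul hw.le]
    congr 1; field_simp; ring
  have hv1γ : v ^ (1-γ) = w ^ (1-γ) * u ^ ((1:ℝ)-1/γ) := by
    rw [hvw, Real.mul_rpow hw.le (Real.rpow_nonneg hu0.le _), ← Real.rpow_mul hu0.le]
    congr 2 <;> (try field_simp) <;> (try ring)
  have hQRel : QRel γ v w = q ^ ((1:ℝ)-1/γ) *
      ((1/γ)/(1-1/γ) * u ^ ((1:ℝ)-1/γ) + u ^ (-(1/γ)) - ((1/γ)/(1-1/γ) + 1)) := by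
    unfold QRel intE
    rw [← hqdef]
    rw [show pres γ w * (v - w) = q * (w * (u ^ (-(1/γ)) - 1)) by rw [hvw]; ring]
    rw [hqdef]
    show v ^ (1-γ) / (γ-1) - w ^ (1-γ)/(γ-1) + w ^ (-γ) * (w * (u ^ (-(1/γ)) - 1)) = _
    rw [hv1γ, show w ^ (-γ) * (w * (u ^ (-(1/γ)) - 1)) = (w^(-γ)*w) * (u ^ (-(1/γ)) - 1) by ring,
      hw2, hK5]
    have hγ1 : γ - 1 ≠ 0 := by linarith
    have hb1 : (1:ℝ) - 1/γ ≠ 0 := by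
      have : (1:ℝ) - 1/γ > 0 := by linarith
      linarith
    field_simp
    ring
  have habs2 : |p - q|^2 = q^2*(u-1)^2 := by rw [sq_abs, hpq]; ring
  have hcube : (p - q)^3 = q^3*(u-1)^3 := by rw [hpq]; ring
  have K6 : q^(-1/γ-1)*q^2 = q^((1:ℝ)-1/γ) := by
    rw [show (q^2 : ℝ) = q ^ ((2:ℕ):ℝ) by rw [Real.rpow_natCast], ← Real.rpow_add hq0]
    congr 1; push_cast; ring
  have K7 : q^(-1/γ-2)*q^3 = q^((1:ℝ)-1/γ) := by
    rw [show (q^3 : ℝ) = q ^ ((3:ℕ):ℝ) by rw [Real.rpow_natCast], ← Real.rpow_add hq0]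
    congr 1; push_cast; ring
  have K8 : q^(-(1/γ))*q = q^((1:ℝ)-1/γ) := by
    calc q^(-(1/γ))*q = q^(-(1/γ))*q^(1:ℝ) := by rw [Real.rpow_one]
      _ = q^(-(1/γ)+1) := (Real.rpow_add hq0 _ _).symm
      _ = q^((1:ℝ)-1/γ) := by congr 1; ring
  have K9 : q^(-1/γ-2)*q^2 = q^(-(1/γ)) := by
    rw [show (q^2 : ℝ) = q ^ ((2:ℕ):ℝ) by rw [Real.rpow_natCast], ← Real.rpow_add hq0]
    congr 1; push_cast; ring
  have e1 : |u-1|^3 = (u-1)^2*|u-1| := by rw [pow_succ, sq_abs]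
  have hqp : (3/4:ℝ) ≤ q/pp := by rw [le_div_iff₀ hpp0]; linarith
  refine ⟨?_, ?_, ?_⟩
  · -- (i)
    have hFe := F_est hβ0 hβ1 u huI
    rw [hpRel, habs2]
    have h1 : q * (u - 1 + (1/γ)⁻¹ * (u ^ (-(1/γ)) - 1))
        ≤ q * (((1/γ)+1)/2*(u-1)^2 + 112/6*|u-1|^3) := by
      apply mul_le_mul_of_nonneg_left _ hq0.le
      exact hFe
    have h2 : (γ+1)/(2*γ*q)*(q^2*(u-1)^2) = q*(((1/γ)+1)/2*(u-1)^2) := by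
      field_simp
      ring
    have hCq : 112/6 ≤ C*q^2 := by
      have hterm : (0:ℝ) ≤ 19*(pp/2)^(-1/γ-2) := by positivity
      have h9 : (9/16:ℝ) ≤ (q/pp)^2 := by nlinarith only [hqp]
      have hA : 38*(9/16:ℝ) ≤ 38*(q/pp)^2 := by linarith only [h9]
      have hB : (0:ℝ) ≤ 19*(pp/2)^(-1/γ-2)*q^2 := mul_nonneg hterm (sq_nonneg q)
      have hCe : C*q^2 = 38*(q/pp)^2 + 19*(pp/2)^(-1/γ-2)*q^2 := by rw [hCdef]; ring
      linarith only [hA, hB, hCe]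
    have h3 : q * (112/6*|u-1|^3) ≤ C*δ*(q^2*(u-1)^2) := by
      calc q * (112/6*|u-1|^3) = 112/6*(u-1)^2*(q*|u-1|) := by rw [e1]; ring
        _ ≤ 112/6*(u-1)^2*δ := by
            apply mul_le_mul_of_nonneg_left hqs.le (by positivity)
        _ ≤ (C*q^2)*((u-1)^2*δ) := by
            have := mul_le_mul_of_nonneg_right hCq
              (mul_nonneg (sq_nonneg (u-1)) hδ0.le)
            linarith only [this]
        _ = C*δ*(q^2*(u-1)^2) := by ring
    linarith only [h1, h2, h3]
  · -- (ii)
    have hGl := G_lower hβ0 hβ1 u huI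
    rw [ge_iff_le, hQRel, habs2, hcube]
    have T1 : q^(-1/γ-1)/(2*γ)*(q^2*(u-1)^2) = q^((1:ℝ)-1/γ)*((1/γ)/2*(u-1)^2) := by
      rw [show q^(-1/γ-1)/(2*γ)*(q^2*(u-1)^2)
          = (q^(-1/γ-1)*q^2)*((u-1)^2/(2*γ)) by ring, K6]
      congr 1
      field_simp
    have T2 : (1+γ)/(3*γ^2)*q^(-1/γ-2)*(q^3*(u-1)^3)
        = q^((1:ℝ)-1/γ)*((1/γ)*((1/γ)+1)/3*(u-1)^3) := by
      rw [show (1+γ)/(3*γ^2)*q^(-1/γ-2)*(q^3*(u-1)^3)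
          = (q^(-1/γ-2)*q^3)*((1+γ)/(3*γ^2)*(u-1)^3) by ring, K7]
      congr 1
      field_simp
    have hR : q^(-1/γ-1)/(2*γ)*(q^2*(u-1)^2) - (1+γ)/(3*γ^2)*q^(-1/γ-2)*(q^3*(u-1)^3)
        = q^((1:ℝ)-1/γ)*((1/γ)/2*(u-1)^2 - (1/γ)*((1/γ)+1)/3*(u-1)^3) := by
      linear_combination T1 - T2
    rw [hR]
    exact mul_le_mul_of_nonneg_left hGl hWq.le
  · -- (iii)
    have hGu := G_upper hβ0 hβ1 u huI
    rw [hQRel, habs2]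
    have h1 : q ^ ((1:ℝ)-1/γ) *
        ((1/γ)/(1-1/γ) * u ^ ((1:ℝ)-1/γ) + u ^ (-(1/γ)) - ((1/γ)/(1-1/γ) + 1))
        ≤ q ^ ((1:ℝ)-1/γ) * ((1/γ)/2*(u-1)^2 + 112/6*|u-1|^3) :=
      mul_le_mul_of_nonneg_left hGu hWq.le
    have h2 : q^(-1/γ-1)/(2*γ)*(q^2*(u-1)^2) = q^((1:ℝ)-1/γ)*((1/γ)/2*(u-1)^2) := by
      rw [show q^(-1/γ-1)/(2*γ)*(q^2*(u-1)^2)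
          = (q^(-1/γ-1)*q^2)*((u-1)^2/(2*γ)) by ring, K6]
      congr 1
      field_simp
    have hexp : (-1/γ-2 : ℝ) ≤ 0 := by
      have h : (-1)/γ = -(1/γ) := by ring
      linarith [hβ0, h]
    have hCe : q^(-1/γ-2) ≤ (pp/2)^(-1/γ-2) :=
      Real.rpow_le_rpow_of_nonpos (by positivity) (by linarith) hexp
    have hrq : (0:ℝ) < q^(-(1/γ)) := Real.rpow_pos_of_pos hq0 _
    have hrq2 : (0:ℝ) < q^(-1/γ-2) := Real.rpow_pos_of_pos hq0 _
    have hCq2 : 112/6 * q^(-(1/γ)) ≤ C*q^2 := by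
      have t1 : 19*q^(-1/γ-2) ≤ C := by
        rw [hCdef]
        have h38 : (0:ℝ) ≤ 38/pp^2 := by positivity
        linarith only [hCe, h38]
      have t2 := mul_le_mul_of_nonneg_right t1 (sq_nonneg q)
      rw [show 19*q^(-1/γ-2)*q^2 = 19*(q^(-1/γ-2)*q^2) by ring, K9] at t2
      linarith only [t2, hrq]
    have h3 : q ^ ((1:ℝ)-1/γ) * (112/6*|u-1|^3) ≤ C*δ*(q^2*(u-1)^2) := by
      calc q ^ ((1:ℝ)-1/γ) * (112/6*|u-1|^3)
          = 112/6*(u-1)^2*(q^(-(1/γ))*(q*|u-1|)) := by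
            rw [e1, ← K8]; ring
        _ ≤ 112/6*(u-1)^2*(q^(-(1/γ))*δ) := by
            apply mul_le_mul_of_nonneg_left _ (by positivity)
            exact mul_le_mul_of_nonneg_left hqs.le hrq.le
        _ = (112/6*q^(-(1/γ)))*((u-1)^2*δ) := by ring
        _ ≤ (C*q^2)*((u-1)^2*δ) := by
            apply mul_le_mul_of_nonneg_right hCq2
              (mul_nonneg (sq_nonneg (u-1)) hδ0.le)
        _ = C*δ*(q^2*(u-1)^2) := by ring
    linarith only [h1, h2, h3]
end
end

section
/- For any c < d and any function f : [c,d] → ℝ (differentiable, with derivative f') satisfying ∫_c^d (y−c)(d−y)|f'(y)|² dy < ∞, one has ∫_c^d |f(y) − (1/(d−c))∫_c^d f(z) dz|² dy ≤ (1/2)∫_c^d (y−c)(d−y)|f'(y)|² dy. -/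
open MeasureTheory intervalIntegral

lemma abs_le_one_add_sq (a : ℝ) : |a| ≤ 1 + a ^ 2 := by
  nlinarith [sq_nonneg (|a| - 1), sq_abs a, abs_nonneg a]

lemma sq_setIntegral_le {y x : ℝ} (hyx : y ≤ x) {g : ℝ → ℝ}
    (hg : IntegrableOn g (Set.Ioc y x)) (hg2 : IntegrableOn (fun t => g t ^ 2) (Set.Ioc y x)) :
    (∫ t in Set.Ioc y x, g t) ^ 2 ≤ (x - y) * ∫ t in Set.Ioc y x, g t ^ 2 := by
  set μ := volume.restrict (Set.Ioc y x) with hμ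
  haveI : IsFiniteMeasure μ := by
    constructor
    rw [hμ, Measure.restrict_apply_univ, Real.volume_Ioc]
    exact ENNReal.ofReal_lt_top
  have hM : (μ Set.univ).toReal = x - y := by
    rw [hμ, Measure.restrict_apply_univ, Real.volume_Ioc, ENNReal.toReal_ofReal (by linarith)]
  set M := (μ Set.univ).toReal with hMdef
  set T := ∫ t, g t ∂μ with hT
  have key : 0 ≤ ∫ t, (M * g t - T) ^ 2 ∂μ := integral_nonneg fun t => sq_nonneg _
  have expand : ∫ t, (M * g t - T) ^ 2 ∂μ = M * (M * (∫ t, g t ^ 2 ∂μ) - T ^ 2) := by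
    have h1 : ∀ t, (M * g t - T) ^ 2 = M ^ 2 * g t ^ 2 - 2 * M * T * g t + T ^ 2 := by
      intro t; ring
    simp_rw [h1]
    rw [MeasureTheory.integral_add, MeasureTheory.integral_sub,
      MeasureTheory.integral_const_mul, MeasureTheory.integral_const_mul,
      MeasureTheory.integral_const, smul_eq_mul]
    · rw [measureReal_def, ← hT, ← hMdef]; ring
    · exact hg2.const_mul _
    · exact hg.const_mul _
    · exact (hg2.const_mul _).sub (hg.const_mul _)
    · exact integrable_const _
  rw [expand] at key
  rcases eq_or_lt_of_le (by linarith : (0:ℝ) ≤ M) with h0 | h0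
  · have hxy : y = x := by linarith
    subst hxy
    simp [hT, hμ]
  · have h2 : 0 ≤ M * (∫ t, g t ^ 2 ∂μ) - T ^ 2 := nonneg_of_mul_nonneg_right key h0
    nlinarith [h2, hM]

lemma integral_affine (a b u v : ℝ) :
    ∫ x in a..b, (u + v * x) = u * (b - a) + v * ((b ^ 2 - a ^ 2) / 2) := by
  rw [_root_.intervalIntegral.integral_add intervalIntegrable_const
    (_root_.intervalIntegral.intervalIntegrable_id.const_mul v),
    _root_.intervalIntegral.integral_const, _root_.intervalIntegral.integral_const_mul,
    integral_id, smul_eq_mul]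
  ring

section
variable (c d : ℝ) (f f' : ℝ → ℝ)


section
variable (c d : ℝ) (f f' : ℝ → ℝ)

lemma integrableOn_deriv_sq
    (hderiv : ∀ y ∈ Set.Icc c d, HasDerivAt f (f' y) y)
    (hfin : IntervalIntegrable (fun y => (y - c) * (d - y) * |f' y| ^ 2) volume c d)
    {y x : ℝ} (hy : c < y) (hyx : y ≤ x) (hx : x < d) :
    IntegrableOn (fun t => deriv f t ^ 2) (Set.Ioc y x) := by
  have hcd : c ≤ d := le_trans (le_trans hy.le hyx) hx.le
  have hsub : Set.Icc y x ⊆ Set.Icc c d := Set.Icc_subset_Icc hy.le hx.le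
  have hdd : ∀ t ∈ Set.Icc y x, deriv f t = f' t := fun t ht => (hderiv t (hsub ht)).deriv
  have hw_int : IntegrableOn (fun t => (t - c) * (d - t) * |f' t| ^ 2) (Set.Ioc y x) := by
    have := (hfin.mono_set (by rw [Set.uIcc_of_le hyx, Set.uIcc_of_le hcd]; exact hsub)).1
    exact this
  set m := (y - c) * (d - x) with hm
  have hm0 : 0 < m := mul_pos (by linarith) (by linarith)
  have hmeas : AEStronglyMeasurable (fun t => deriv f t ^ 2)
      (volume.restrict (Set.Ioc y x)) :=
    ((measurable_deriv f).pow_const 2).aestronglyMeasurable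
  have hbound : ∀ t ∈ Set.Ioc y x, deriv f t ^ 2 ≤ m⁻¹ * ((t - c) * (d - t) * |f' t| ^ 2) := by
    intro t ht
    have ht' : t ∈ Set.Icc y x := Set.Ioc_subset_Icc_self ht
    rw [hdd t ht', ← sq_abs (f' t)]
    have h1 : m ≤ (t - c) * (d - t) := by
      have := ht'.1; have := ht'.2
      nlinarith
    have h2 : 0 ≤ |f' t| ^ 2 := sq_nonneg _
    have h3 : m * |f' t| ^ 2 ≤ (t - c) * (d - t) * |f' t| ^ 2 := by nlinarith
    calc |f' t| ^ 2 = m⁻¹ * (m * |f' t| ^ 2) := by field_simp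
    _ ≤ m⁻¹ * ((t - c) * (d - t) * |f' t| ^ 2) :=
        mul_le_mul_of_nonneg_left h3 (le_of_lt (inv_pos.mpr hm0))
  apply Integrable.mono' (hw_int.const_mul m⁻¹) hmeas
  filter_upwards [ae_restrict_mem measurableSet_Ioc] with t ht
  rw [Real.norm_eq_abs, abs_of_nonneg (sq_nonneg _)]
  exact hbound t ht

lemma ptwise
    (hderiv : ∀ y ∈ Set.Icc c d, HasDerivAt f (f' y) y)
    (hfin : IntervalIntegrable (fun y => (y - c) * (d - y) * |f' y| ^ 2) volume c d)
    {y x : ℝ} (hy : c < y) (hyx : y ≤ x) (hx : x < d) :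
    (f x - f y) ^ 2 ≤ (x - y) * ∫ t in Set.Ioc y x, (deriv f t) ^ 2 := by
  have hcd : c ≤ d := le_trans (le_trans hy.le hyx) hx.le
  have hsub : Set.Icc y x ⊆ Set.Icc c d := Set.Icc_subset_Icc hy.le hx.le
  have hdd : ∀ t ∈ Set.Icc y x, deriv f t = f' t := fun t ht => (hderiv t (hsub ht)).deriv
  have hg2 : IntegrableOn (fun t => deriv f t ^ 2) (Set.Ioc y x) :=
    integrableOn_deriv_sq c d f f' hderiv hfin hy hyx hx
  have hg1 : IntegrableOn (deriv f) (Set.Ioc y x) := by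
    apply Integrable.mono' ((integrable_const 1).add hg2) (measurable_deriv f).aestronglyMeasurable
    filter_upwards with t
    rw [Real.norm_eq_abs]
    exact abs_le_one_add_sq _
  have hftc : f x - f y = ∫ t in y..x, deriv f t := by
    rw [intervalIntegral.integral_eq_sub_of_hasDerivAt]
    · intro t ht
      rw [Set.uIcc_of_le hyx] at ht
      rw [hdd t ht]
      exact hderiv t (hsub ht)
    · rw [intervalIntegrable_iff, Set.uIoc_of_le hyx]
      exact hg1
  rw [hftc, intervalIntegral.integral_of_le hyx]
  exact sq_setIntegral_le hyx hg1 hg2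

lemma key_double (hcd : c < d)
    (hderiv : ∀ y ∈ Set.Icc c d, HasDerivAt f (f' y) y)
    (hfin : IntervalIntegrable (fun y => (y - c) * (d - y) * |f' y| ^ 2) volume c d) :
    2 * (d - c) * (∫ y in Set.Ioo c d, f y ^ 2) - 2 * (∫ y in Set.Ioo c d, f y) ^ 2
      ≤ (d - c) * ∫ y in Set.Ioo c d, (y - c) * (d - y) * |f' y| ^ 2 := by
  set S := Set.Ioo c d with hS
  set L := d - c with hL
  have hL0 : 0 < L := by simp [hL]; linarith
  set T := ∫ y in S, f y with hT
  set Q := ∫ y in S, f y ^ 2 with hQ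
  set R := ∫ y in S, (y - c) * (d - y) * |f' y| ^ 2 with hR
  set G : ℝ → ENNReal := fun t => ENNReal.ofReal (deriv f t ^ 2) with hG
  have hGmeas : Measurable G := ENNReal.measurable_ofReal.comp ((measurable_deriv f).pow_const 2)
  have hvolS : (volume S).toReal = L := by
    rw [hS, Real.volume_Ioo, ENNReal.toReal_ofReal (by linarith)]
  have hfc : ContinuousOn f (Set.Icc c d) := fun y hy =>
    (hderiv y hy).continuousAt.continuousWithinAt
  have hfint : IntegrableOn f S :=
    (hfc.integrableOn_Icc).mono_set Set.Ioo_subset_Icc_self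
  have hf2int : IntegrableOn (fun y => f y ^ 2) S :=
    ((hfc.pow 2).integrableOn_Icc).mono_set Set.Ioo_subset_Icc_self
  set h : ℝ → ℝ := fun x => L * f x ^ 2 - 2 * T * f x + Q with hh
  have hhint : IntegrableOn h S := by
    exact ((hf2int.const_mul L).sub (hfint.const_mul (2 * T))).add (integrable_const Q)
  have i1 : IntegrableOn (fun x => L * f x ^ 2 - 2 * T * f x) S := by
    exact (hf2int.const_mul L).sub (hfint.const_mul (2 * T))
  have i1a : IntegrableOn (fun x => L * f x ^ 2) S := by exact hf2int.const_mul L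
  have i1b : IntegrableOn (fun x => 2 * T * f x) S := by exact hfint.const_mul (2 * T)
  have step1 : ∫ x in S, h x = 2 * L * Q - 2 * T ^ 2 := by
    rw [hh]
    rw [integral_add i1 (integrable_const Q),
      integral_sub i1a i1b,
      MeasureTheory.integral_const_mul, MeasureTheory.integral_const_mul, MeasureTheory.integral_const, smul_eq_mul, measureReal_def, Measure.restrict_apply_univ, hvolS, ← hT, ← hQ]
    ring
  have step2 : ∀ x ∈ S, h x = ∫ y in S, (f x - f y) ^ 2 := by
    intro x hx
    have expand : ∀ y : ℝ, (f x - f y) ^ 2 = f x ^ 2 - 2 * f x * f y + f y ^ 2 := by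
      intro y; ring
    simp_rw [expand]
    have j1 : IntegrableOn (fun y => f x ^ 2 - 2 * f x * f y) S := by
      exact (integrable_const (f x ^ 2)).sub (hfint.const_mul (2 * f x))
    have j1a : IntegrableOn (fun y : ℝ => f x ^ 2) S := integrable_const _
    have j1b : IntegrableOn (fun y => 2 * f x * f y) S := by exact hfint.const_mul (2 * f x)
    rw [integral_add j1 hf2int,
      integral_sub j1a j1b,
      MeasureTheory.integral_const_mul, MeasureTheory.integral_const, smul_eq_mul, measureReal_def, Measure.restrict_apply_univ, hvolS, ← hT, ← hQ, hh]
    ring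
  have step3 : ∀ x ∈ S, 0 ≤ h x := by
    intro x hx
    rw [step2 x hx]
    exact integral_nonneg fun y => sq_nonneg _
  have claim3 : ∀ x ∈ S, ∀ y ∈ S, ENNReal.ofReal ((f x - f y) ^ 2)
      ≤ ENNReal.ofReal |x - y| * ∫⁻ t in S, (Set.uIoc y x).indicator G t := by
    have core : ∀ y x : ℝ, c < y → y ≤ x → x < d → ENNReal.ofReal ((f x - f y) ^ 2)
        ≤ ENNReal.ofReal |x - y| * ∫⁻ t in S, (Set.uIoc y x).indicator G t := by
      intro y x hy hyx hx
      have hint := integrableOn_deriv_sq c d f f' hderiv hfin hy hyx hx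
      have hpt := ptwise c d f f' hderiv hfin hy hyx hx
      have h1 : ENNReal.ofReal ((f x - f y) ^ 2)
          ≤ ENNReal.ofReal ((x - y) * ∫ t in Set.Ioc y x, deriv f t ^ 2) :=
        ENNReal.ofReal_le_ofReal hpt
      rw [ENNReal.ofReal_mul (by linarith : (0:ℝ) ≤ x - y)] at h1
      have h2 : ENNReal.ofReal (∫ t in Set.Ioc y x, deriv f t ^ 2)
          = ∫⁻ t in Set.Ioc y x, G t :=
        ofReal_integral_eq_lintegral_ofReal hint (ae_of_all _ fun t => sq_nonneg _)
      rw [h2] at h1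
      have h3 : ∫⁻ t in S, (Set.uIoc y x).indicator G t = ∫⁻ t in Set.Ioc y x, G t := by
        rw [Set.uIoc_of_le hyx, lintegral_indicator measurableSet_Ioc,
          Measure.restrict_restrict measurableSet_Ioc]
        congr 1
        rw [Set.inter_eq_left.mpr]
        exact fun t ht => ⟨lt_of_lt_of_le hy ht.1.le, lt_of_le_of_lt ht.2 hx⟩
      rw [h3]
      have : |x - y| = x - y := abs_of_nonneg (by linarith)
      rw [this]
      exact h1
    intro x hx y hy
    rcases le_total y x with hxy | hxy
    · exact core y x hy.1 hxy hx.2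
    · have hcase := core x y hx.1 hxy hy.2
      have e1 : (f x - f y) ^ 2 = (f y - f x) ^ 2 := by ring
      rw [e1, Set.uIoc_comm, abs_sub_comm]
      exact hcase
  have chain : ENNReal.ofReal (2 * L * Q - 2 * T ^ 2)
      ≤ ∫⁻ x in S, ∫⁻ y in S,
          ENNReal.ofReal |x - y| * ∫⁻ t in S, (Set.uIoc y x).indicator G t := by
    rw [← step1]
    rw [ofReal_integral_eq_lintegral_ofReal hhint (by
      filter_upwards [ae_restrict_mem measurableSet_Ioo] with x hx
      exact step3 x hx)]
    apply lintegral_mono_ae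
    filter_upwards [ae_restrict_mem measurableSet_Ioo] with x hx
    have jint : IntegrableOn (fun y => (f x - f y) ^ 2) S := by
      have jj : IntegrableOn (fun y => f x ^ 2 - 2 * f x * f y + f y ^ 2) S := by
        exact ((integrable_const (f x ^ 2)).sub (hfint.const_mul (2 * f x))).add hf2int
      exact jj.congr (ae_of_all _ fun y => by ring)
    rw [step2 x hx,
      ofReal_integral_eq_lintegral_ofReal jint (ae_of_all _ fun y => sq_nonneg _)]
    apply lintegral_mono_ae
    filter_upwards [ae_restrict_mem measurableSet_Ioo] with y hy
    exact claim3 x hx y hy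
  -- kernel
  set k : ℝ → ℝ → ℝ := fun x t =>
    if t ≤ x then (t - c) * (2 * x - t - c) / 2 else (d - t) * (d + t - 2 * x) / 2 with hk
  have hGne : ∀ t, G t ≠ ⊤ := fun t => ENNReal.ofReal_ne_top
  -- first swap, for fixed x
  have swap1 : ∀ x, ∫⁻ y in S, ENNReal.ofReal |x - y| * ∫⁻ t in S, (Set.uIoc y x).indicator G t
      = ∫⁻ t in S, ∫⁻ y in S, ENNReal.ofReal |x - y| * (Set.uIoc y x).indicator G t := by
    intro x
    have e1 : ∀ y : ℝ, ENNReal.ofReal |x - y| * ∫⁻ t in S, (Set.uIoc y x).indicator G t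
        = ∫⁻ t in S, ENNReal.ofReal |x - y| * (Set.uIoc y x).indicator G t := fun y =>
      (lintegral_const_mul' _ _ ENNReal.ofReal_ne_top).symm
    simp_rw [e1]
    apply lintegral_lintegral_swap
    have meq : (fun p : ℝ × ℝ => ENNReal.ofReal |x - p.1| * (Set.uIoc p.1 x).indicator G p.2)
        = fun p => ENNReal.ofReal |x - p.1| *
            (if p.1 ⊓ x < p.2 ∧ p.2 ≤ p.1 ⊔ x then G p.2 else 0) := by
      funext p
      classical
      rw [Set.indicator_apply]
      congr 1
      simp only [Set.uIoc, Set.mem_Ioc]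
    have hmeas2 : Measurable (fun p : ℝ × ℝ => ENNReal.ofReal |x - p.1| *
        (Set.uIoc p.1 x).indicator G p.2) := by
      rw [meq]
      apply Measurable.mul
      · exact ENNReal.measurable_ofReal.comp
          (continuous_abs.comp (continuous_const.sub continuous_fst)).measurable
      · apply Measurable.ite
        · exact (measurableSet_lt (measurable_fst.min measurable_const) measurable_snd).inter
            (measurableSet_le measurable_snd (measurable_fst.max measurable_const))
        · exact hGmeas.comp measurable_snd
        · exact measurable_const
    exact hmeas2.aemeasurable
  -- inner y-integral computation
  have inner_val : ∀ x ∈ S, ∀ t ∈ S,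
      ∫⁻ y in S, ENNReal.ofReal |x - y| * (Set.uIoc y x).indicator G t
        = G t * ENNReal.ofReal (k x t) := by
    intro x hx t ht
    by_cases htx : t ≤ x
    · -- integrate over y < t
      have e : ∀ y ∈ S, ENNReal.ofReal |x - y| * (Set.uIoc y x).indicator G t
          = (Set.Iio t).indicator (fun y => ENNReal.ofReal (x - y) * G t) y := by
        intro y hy
        by_cases hyt : y < t
        · rw [Set.indicator_of_mem (Set.mem_Iio.mpr hyt),
            Set.indicator_of_mem (by
              rw [Set.uIoc_of_le (le_trans hyt.le htx), Set.mem_Ioc]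
              exact ⟨hyt, htx⟩),
            abs_of_nonneg (by linarith : (0:ℝ) ≤ x - y)]
        · push_neg at hyt
          rw [Set.indicator_of_notMem (by
              rw [Set.mem_uIoc]
              push_neg
              refine ⟨fun h1 => by linarith, fun h1 => by linarith⟩
              : t ∉ Set.uIoc y x),
            Set.indicator_of_notMem (by simpa using not_lt.mpr hyt), mul_zero]
      rw [setLIntegral_congr_fun measurableSet_Ioo e,
        lintegral_indicator measurableSet_Iio,
        Measure.restrict_restrict measurableSet_Iio]
      have hseteq : Set.Iio t ∩ S = Set.Ioo c t := by
        ext y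
        simp only [Set.mem_inter_iff, Set.mem_Iio, hS, Set.mem_Ioo]
        constructor
        · rintro ⟨h1, h2, h3⟩; exact ⟨h2, h1⟩
        · rintro ⟨h1, h2⟩; exact ⟨h2, h1, lt_trans h2 ht.2⟩
      rw [hseteq, lintegral_mul_const' _ _ (hGne t)]
      have hint : IntegrableOn (fun y => x - y) (Set.Ioo c t) :=
        ((continuous_const.sub continuous_id).integrableOn_Icc).mono_set
          Set.Ioo_subset_Icc_self
      rw [← ofReal_integral_eq_lintegral_ofReal hint (by
        filter_upwards [ae_restrict_mem measurableSet_Ioo] with y hy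
        have h2 : y < t := hy.2
        show (0:ℝ) ≤ x - y
        linarith)]
      have hval : ∫ y in Set.Ioo c t, (x - y) = k x t := by
        rw [← integral_Ioc_eq_integral_Ioo,
          ← intervalIntegral.integral_of_le (le_of_lt ht.1)]
        rw [_root_.intervalIntegral.integral_sub intervalIntegrable_const
          _root_.intervalIntegral.intervalIntegrable_id,
          _root_.intervalIntegral.integral_const,
          integral_id, smul_eq_mul]
        simp only [hk]
        rw [if_pos htx]
        ring
      rw [hval, mul_comm]
    · -- x < t : integrate over y ≥ t
      push_neg at htx
      have e : ∀ y ∈ S, ENNReal.ofReal |x - y| * (Set.uIoc y x).indicator G t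
          = (Set.Ici t).indicator (fun y => ENNReal.ofReal (y - x) * G t) y := by
        intro y hy
        by_cases hyt : t ≤ y
        · rw [Set.indicator_of_mem (Set.mem_Ici.mpr hyt),
            Set.indicator_of_mem (by
              rw [Set.uIoc_comm, Set.uIoc_of_le (le_trans htx.le hyt), Set.mem_Ioc]
              exact ⟨htx, hyt⟩),
            abs_of_nonpos (by linarith : x - y ≤ 0)]
          congr 1
          ring
        · push_neg at hyt
          rw [Set.indicator_of_notMem (by
              rw [Set.mem_uIoc]
              push_neg
              refine ⟨fun h1 => by linarith, fun h1 => by linarith⟩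
              : t ∉ Set.uIoc y x),
            Set.indicator_of_notMem (by simpa using not_le.mpr hyt), mul_zero]
      rw [setLIntegral_congr_fun measurableSet_Ioo e,
        lintegral_indicator measurableSet_Ici,
        Measure.restrict_restrict measurableSet_Ici]
      have hseteq : Set.Ici t ∩ S = Set.Ico t d := by
        ext y
        simp only [Set.mem_inter_iff, Set.mem_Ici, hS, Set.mem_Ioo, Set.mem_Ico]
        constructor
        · rintro ⟨h1, h2, h3⟩; exact ⟨h1, h3⟩
        · rintro ⟨h1, h2⟩; exact ⟨h1, lt_of_lt_of_le ht.1 h1, h2⟩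
      rw [hseteq, lintegral_mul_const' _ _ (hGne t)]
      have hint : IntegrableOn (fun y => y - x) (Set.Ico t d) :=
        ((continuous_id.sub continuous_const).integrableOn_Icc).mono_set
          Set.Ico_subset_Icc_self
      rw [← ofReal_integral_eq_lintegral_ofReal hint (by
        filter_upwards [ae_restrict_mem measurableSet_Ico] with y hy
        have h2 : t ≤ y := hy.1
        show (0:ℝ) ≤ y - x
        linarith)]
      have hval : ∫ y in Set.Ico t d, (y - x) = k x t := by
        rw [integral_Ico_eq_integral_Ioo, ← integral_Ioc_eq_integral_Ioo,
          ← intervalIntegral.integral_of_le (le_of_lt ht.2)]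
        rw [_root_.intervalIntegral.integral_sub _root_.intervalIntegral.intervalIntegrable_id
          intervalIntegrable_const,
          _root_.intervalIntegral.integral_const,
          integral_id, smul_eq_mul]
        simp only [hk]
        rw [if_neg (not_le.mpr htx)]
        ring
      rw [hval, mul_comm]
  have bound2 : ENNReal.ofReal (2 * L * Q - 2 * T ^ 2)
      ≤ ∫⁻ x in S, ∫⁻ t in S, G t * ENNReal.ofReal (k x t) := by
    refine le_trans chain (le_of_eq (setLIntegral_congr_fun measurableSet_Ioo
      (fun x hx => ?_)))
    rw [swap1 x]
    exact setLIntegral_congr_fun measurableSet_Ioo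
      (fun t ht => inner_val x hx t ht)
  have hkmeas : Measurable (fun p : ℝ × ℝ => k p.1 p.2) := by
    simp only [hk]
    apply Measurable.ite (measurableSet_le measurable_snd measurable_fst)
    · exact ((measurable_snd.sub measurable_const).mul
        (((measurable_const.mul measurable_fst).sub measurable_snd).sub
          measurable_const)).div_const 2
    · exact ((measurable_const.sub measurable_snd).mul
        ((measurable_const.add measurable_snd).sub
          (measurable_const.mul measurable_fst))).div_const 2
  have swap2 : ∫⁻ x in S, ∫⁻ t in S, G t * ENNReal.ofReal (k x t)
      = ∫⁻ t in S, ∫⁻ x in S, G t * ENNReal.ofReal (k x t) := by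
    apply lintegral_lintegral_swap
    exact ((hGmeas.comp measurable_snd).mul
      (ENNReal.measurable_ofReal.comp hkmeas)).aemeasurable
  have final_inner : ∀ t ∈ S, ∫⁻ x in S, G t * ENNReal.ofReal (k x t)
      = G t * ENNReal.ofReal (L * ((t - c) * (d - t))) := by
    intro t ht
    rw [lintegral_const_mul' _ _ (hGne t)]
    congr 1
    have hsplit : S = Set.Ioo c t ∪ Set.Ico t d := by
      ext z
      simp only [hS, Set.mem_Ioo, Set.mem_union, Set.mem_Ico]
      constructor
      · rintro ⟨h1, h2⟩
        rcases lt_or_ge z t with hz | hz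
        · exact Or.inl ⟨h1, hz⟩
        · exact Or.inr ⟨hz, h2⟩
      · rintro (⟨h1, h2⟩ | ⟨h1, h2⟩)
        · exact ⟨h1, lt_trans h2 ht.2⟩
        · exact ⟨lt_of_lt_of_le ht.1 h1, h2⟩
    have hdisj : Disjoint (Set.Ioo c t) (Set.Ico t d) := by
      rw [Set.disjoint_left]
      rintro z ⟨_, h1⟩ ⟨h2, _⟩
      exact absurd h2 (not_le.mpr h1)
    have eq1 : Set.EqOn (fun x => k x t)
        (fun x => (d - t) * (d + t) / 2 + (-(d - t)) * x) (Set.Ioo c t) := by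
      intro x hx
      simp only [hk]
      rw [if_neg (not_le.mpr hx.2)]
      ring
    have eq2 : Set.EqOn (fun x => k x t)
        (fun x => (-((t - c) * (t + c) / 2)) + (t - c) * x) (Set.Ico t d) := by
      intro x hx
      simp only [hk]
      rw [if_pos hx.1]
      ring
    have aff1 : IntegrableOn (fun x => (d - t) * (d + t) / 2 + (-(d - t)) * x)
        (Set.Ioo c t) :=
      ((continuous_const.add (continuous_const.mul continuous_id)).integrableOn_Icc).mono_set
        Set.Ioo_subset_Icc_self
    have aff2 : IntegrableOn (fun x => (-((t - c) * (t + c) / 2)) + (t - c) * x)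
        (Set.Ico t d) :=
      ((continuous_const.add (continuous_const.mul continuous_id)).integrableOn_Icc).mono_set
        Set.Ico_subset_Icc_self
    have p1 : IntegrableOn (fun x => k x t) (Set.Ioo c t) :=
      aff1.congr_fun (fun x hx => (eq1 hx).symm) measurableSet_Ioo
    have p2 : IntegrableOn (fun x => k x t) (Set.Ico t d) :=
      aff2.congr_fun (fun x hx => (eq2 hx).symm) measurableSet_Ico
    have pInt : IntegrableOn (fun x => k x t) S := by
      rw [hsplit]
      exact p1.union p2
    have pNonneg : 0 ≤ᵐ[volume.restrict S] fun x => k x t := by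
      filter_upwards [ae_restrict_mem measurableSet_Ioo] with x hx
      show (0:ℝ) ≤ k x t
      simp only [hk]
      split_ifs with hcase
      · have := ht.1; have := hx.2
        apply div_nonneg _ (by norm_num)
        apply mul_nonneg <;> linarith
      · push_neg at hcase
        have := ht.2; have := hx.1
        apply div_nonneg _ (by norm_num)
        apply mul_nonneg <;> linarith
    rw [← ofReal_integral_eq_lintegral_ofReal pInt pNonneg]
    congr 1
    rw [hsplit, setIntegral_union hdisj measurableSet_Ico p1 p2,
      setIntegral_congr_fun measurableSet_Ioo eq1,
      setIntegral_congr_fun measurableSet_Ico eq2]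
    rw [show (∫ x in Set.Ioo c t, ((d - t) * (d + t) / 2 + (-(d - t)) * x))
        = ∫ x in c..t, ((d - t) * (d + t) / 2 + (-(d - t)) * x) by
      rw [intervalIntegral.integral_of_le ht.1.le, integral_Ioc_eq_integral_Ioo]]
    rw [show (∫ x in Set.Ico t d, ((-((t - c) * (t + c) / 2)) + (t - c) * x))
        = ∫ x in t..d, ((-((t - c) * (t + c) / 2)) + (t - c) * x) by
      rw [intervalIntegral.integral_of_le ht.2.le, integral_Ioc_eq_integral_Ioo,
        integral_Ico_eq_integral_Ioo]]
    rw [integral_affine, integral_affine, hL]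
    ring
  have final : ∫⁻ t in S, ∫⁻ x in S, G t * ENNReal.ofReal (k x t)
      = ENNReal.ofReal (L * R) := by
    rw [setLIntegral_congr_fun measurableSet_Ioo (fun t ht => final_inner t ht)]
    have e2 : ∀ t ∈ S, G t * ENNReal.ofReal (L * ((t - c) * (d - t)))
        = ENNReal.ofReal ((t - c) * (d - t) * |f' t| ^ 2 * L) := by
      intro t ht
      have hd : deriv f t = f' t := (hderiv t ⟨ht.1.le, ht.2.le⟩).deriv
      rw [hG]
      simp only
      rw [hd, ← ENNReal.ofReal_mul (sq_nonneg _)]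
      congr 1
      rw [sq_abs]
      ring
    rw [setLIntegral_congr_fun measurableSet_Ioo e2]
    rw [← ofReal_integral_eq_lintegral_ofReal
      (((hfin.1).mono_set Set.Ioo_subset_Ioc_self).mul_const L)
      (by
        filter_upwards [ae_restrict_mem measurableSet_Ioo] with t ht
        show (0:ℝ) ≤ (t - c) * (d - t) * |f' t| ^ 2 * L
        have := ht.1; have := ht.2
        apply mul_nonneg _ (by linarith)
        exact mul_nonneg (mul_nonneg (by linarith) (by linarith)) (sq_nonneg _))]
    congr 1
    rw [MeasureTheory.integral_mul_const, ← hR, mul_comm]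
  have hRnn : 0 ≤ R := by
    rw [hR]
    apply setIntegral_nonneg measurableSet_Ioo
    intro t ht
    exact mul_nonneg (mul_nonneg (by linarith [ht.1]) (by linarith [ht.2])) (sq_nonneg _)
  have last : ENNReal.ofReal (2 * L * Q - 2 * T ^ 2) ≤ ENNReal.ofReal (L * R) := by
    rw [← final, ← swap2]
    exact bound2
  have conc := (ENNReal.ofReal_le_ofReal_iff (mul_nonneg (by linarith) hRnn)).mp last
  linarith
end


/-- Poincaré-type inequality on a general interval `[c,d]` with the degenerate
weight `(y−c)(d−y)` and the optimal constant `1/2`, which is independent of the length of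
the interval. -/
theorem poincare_type_inequality (c d : ℝ) (hcd : c < d) (f f' : ℝ → ℝ)
    (hderiv : ∀ y ∈ Set.Icc c d, HasDerivAt f (f' y) y)
    (hfin : IntervalIntegrable (fun y => (y - c) * (d - y) * |f' y| ^ 2) volume c d) :
    (∫ y in c..d, |f y - (1 / (d - c)) * ∫ z in c..d, f z| ^ 2)
      ≤ (1 / 2) * ∫ y in c..d, (y - c) * (d - y) * |f' y| ^ 2 := by
  have hL0 : (0:ℝ) < d - c := by linarith
  have key := key_double c d f f' hcd hderiv hfin
  have hfc : ContinuousOn f (Set.Icc c d) := fun y hy =>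
    (hderiv y hy).continuousAt.continuousWithinAt
  have hfint : IntegrableOn f (Set.Ioo c d) :=
    (hfc.integrableOn_Icc).mono_set Set.Ioo_subset_Icc_self
  have hf2int : IntegrableOn (fun y => f y ^ 2) (Set.Ioo c d) :=
    ((hfc.pow 2).integrableOn_Icc).mono_set Set.Ioo_subset_Icc_self
  have cv : ∀ g : ℝ → ℝ, (∫ y in c..d, g y) = ∫ y in Set.Ioo c d, g y := by
    intro g
    rw [intervalIntegral.integral_of_le hcd.le, integral_Ioc_eq_integral_Ioo]
  simp only [cv]
  set T := ∫ y in Set.Ioo c d, f y with hT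
  set Q := ∫ y in Set.Ioo c d, f y ^ 2 with hQ
  set R := ∫ y in Set.Ioo c d, (y - c) * (d - y) * |f' y| ^ 2 with hR
  set a := 1 / (d - c) * T with ha
  simp only [sq_abs]
  have haL : a * (d - c) = T := by
    rw [ha]; field_simp
  have hvolS : ((volume : Measure ℝ) (Set.Ioo c d)).toReal = d - c := by
    rw [Real.volume_Ioo, ENNReal.toReal_ofReal (by linarith)]
  have expand : ∫ y in Set.Ioo c d, (f y - a) ^ 2 = Q - 2 * a * T + a ^ 2 * (d - c) := by
    have e : ∀ y : ℝ, (f y - a) ^ 2 = f y ^ 2 - 2 * a * f y + a ^ 2 := fun y => by ring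
    simp_rw [e]
    have j1 : IntegrableOn (fun y => f y ^ 2 - 2 * a * f y) (Set.Ioo c d) := by
      exact hf2int.sub (hfint.const_mul (2 * a))
    have j1b : IntegrableOn (fun y => 2 * a * f y) (Set.Ioo c d) := by
      exact hfint.const_mul (2 * a)
    rw [integral_add j1 (integrable_const (a ^ 2)), integral_sub hf2int j1b,
      MeasureTheory.integral_const_mul, MeasureTheory.integral_const, smul_eq_mul,
      measureReal_def, Measure.restrict_apply_univ, hvolS, ← hT, ← hQ]
    ring
  rw [expand]
  have h5 : (a * (d - c)) ^ 2 = T ^ 2 := by rw [haL]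
  have h6 : a * (d - c) * T = T * T := by rw [haL]
  have hgoal : (Q - 2 * a * T + a ^ 2 * (d - c)) * (2 * (d - c)) ≤ 1 / 2 * R * (2 * (d - c)) := by
    nlinarith [key, h5, h6]
  exact le_of_mul_le_mul_right hgoal (by linarith)
end
end

section
/- Let γ > 1. For any v₊ > 0 and u₊ < 0, there exists a unique v₋ with 0 < v₋ < v₊ such that v₊^{1−γ}·(1 − (v₋/v₊)^{−γ})·(1 − v₋/v₊) = −u₊². -/
open Real Filter Topology

/-- Let `γ > 1`.  For any `v₊ > 0` and `u₊ < 0`, there exists a unique `v₋`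
with `0 < v₋ < v₊` such that
`v₊^{1−γ}·(1 − (v₋/v₊)^{−γ})·(1 − v₋/v₊) = −u₊²`
(determination of the left state for the impermeable wall problem). -/
theorem impermeable_left_state_exists_unique
    (γ : ℝ) (hγ : 1 < γ) (vp up : ℝ) (hvp : 0 < vp) (hup : up < 0) :
    ∃! vm : ℝ, 0 < vm ∧ vm < vp ∧
      vp ^ (1 - γ) * (1 - (vm / vp) ^ (-γ)) * (1 - vm / vp) = -up ^ 2 := by
  have hγ0 : (0:ℝ) < γ := by linarith
  set c : ℝ := vp ^ (1 - γ) with hc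
  have hcpos : 0 < c := rpow_pos_of_pos hvp _
  set F : ℝ → ℝ := fun v => c * (((v / vp) ^ (-γ) - 1) * (1 - v / vp)) with hF
  -- equivalence of equations
  have heq : ∀ v : ℝ, (c * (1 - (v / vp) ^ (-γ)) * (1 - v / vp) = -up ^ 2) ↔ F v = up ^ 2 := by
    intro v
    simp only [hF]
    constructor <;> intro h <;> nlinarith [h]
  -- strict antitonicity on Ioo 0 vp
  have hanti : ∀ x y : ℝ, 0 < x → y < vp → x < y → F y < F x := by
    intro x y hx hyvp hxy
    have hy : 0 < y := hx.trans hxy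
    have hsx : 0 < x / vp := div_pos hx hvp
    have hty : y / vp < 1 := (div_lt_one hvp).2 hyvp
    have hst : x / vp < y / vp := by gcongr
    have hA : (y / vp) ^ (-γ) < (x / vp) ^ (-γ) :=
      rpow_lt_rpow_of_neg hsx hst (by linarith)
    have hAy : 1 < (y / vp) ^ (-γ) := by
      rw [one_lt_rpow_iff_of_pos (hsx.trans hst)]
      exact Or.inr ⟨hty, by linarith⟩
    have hB : 1 - y / vp < 1 - x / vp := by linarith
    have hBy : 0 < 1 - y / vp := by linarith
    have := mul_lt_mul'' (by linarith : (y / vp) ^ (-γ) - 1 < (x / vp) ^ (-γ) - 1) hB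
      (by linarith) (le_of_lt hBy)
    exact mul_lt_mul_of_pos_left this hcpos
  -- continuity on sets avoiding 0
  have hcont : ∀ x : ℝ, x ≠ 0 → ContinuousAt F x := by
    intro x hx
    have h1 : ContinuousAt (fun v : ℝ => (v / vp) ^ (-γ)) x := by
      apply ContinuousAt.rpow_const
      · exact continuousAt_id.div_const vp
      · left; exact div_ne_zero hx (ne_of_gt hvp)
    fun_prop (disch := assumption)
  -- find b near vp with F b < up²
  have hFvp : F vp = 0 := by
    simp [hF, div_self (ne_of_gt hvp)]
  have hup2 : 0 < up ^ 2 := by nlinarith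
  have hb : ∃ b : ℝ, 0 < b ∧ b < vp ∧ F b < up ^ 2 := by
    have hcvp : ContinuousAt F vp := hcont vp (ne_of_gt hvp)
    have h1 : ∀ᶠ v in 𝓝 vp, F v < up ^ 2 := by
      have := hcvp.eventually_lt continuousAt_const (by rw [hFvp]; exact hup2)
      exact this
    have h2 : ∀ᶠ v in 𝓝 vp, 0 < v := eventually_gt_nhds hvp
    have h3 : ∀ᶠ v in 𝓝[<] vp, (F v < up ^ 2 ∧ 0 < v) ∧ v ∈ Set.Iio vp :=
      ((h1.and h2).filter_mono nhdsWithin_le_nhds).and eventually_mem_nhdsWithin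
    obtain ⟨b, ⟨hb1, hb2⟩, hb3⟩ := h3.exists
    exact ⟨b, hb2, hb3, hb1⟩
  -- find a near 0 with F a > up²
  have ha : ∃ a : ℝ, 0 < a ∧ a < vp ∧ up ^ 2 < F a := by
    have htop : Tendsto F (𝓝[>] (0:ℝ)) atTop := by
      have h1 : Tendsto (fun v : ℝ => (v / vp) ^ (-γ)) (𝓝[>] (0:ℝ)) atTop := by
        have hdiv : Tendsto (fun v : ℝ => (v / vp)⁻¹) (𝓝[>] (0:ℝ)) atTop := by
          have : Tendsto (fun v : ℝ => v / vp) (𝓝[>] (0:ℝ)) (𝓝[>] (0:ℝ)) := by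
            apply tendsto_nhdsWithin_of_tendsto_nhds_of_eventually_within
            · exact (continuous_id.div_const vp).tendsto' 0 0 (by simp) |>.mono_left nhdsWithin_le_nhds
            · filter_upwards [eventually_mem_nhdsWithin] with v hv
              exact div_pos hv hvp
          exact tendsto_inv_nhdsGT_zero.comp this
        have h2 : Tendsto (fun v : ℝ => ((v / vp)⁻¹) ^ γ) (𝓝[>] (0:ℝ)) atTop :=
          (tendsto_rpow_atTop hγ0).comp hdiv
        refine h2.congr' ?_
        filter_upwards [eventually_mem_nhdsWithin] with v hv
        have hpos : 0 < v / vp := div_pos hv hvp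
        rw [Real.inv_rpow hpos.le, ← Real.rpow_neg hpos.le]
      have h3 : Tendsto (fun v : ℝ => (v / vp) ^ (-γ) - 1) (𝓝[>] (0:ℝ)) atTop :=
        h1.atTop_add tendsto_const_nhds
      have h4 : Tendsto (fun v : ℝ => 1 - v / vp) (𝓝[>] (0:ℝ)) (𝓝 1) := by
        have : Tendsto (fun v : ℝ => 1 - v / vp) (𝓝 (0:ℝ)) (𝓝 1) := by
          exact ((continuous_const.sub (continuous_id.div_const vp)).tendsto' 0 1 (by simp))
        exact this.mono_left nhdsWithin_le_nhds
      exact (h3.atTop_mul_pos one_pos h4).const_mul_atTop hcpos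
    have h5 : ∀ᶠ v in 𝓝[>] (0:ℝ), up ^ 2 < F v := htop.eventually_gt_atTop _
    have h6 : ∀ᶠ v in 𝓝[>] (0:ℝ), v < vp := by
      have : ∀ᶠ v in 𝓝 (0:ℝ), v < vp := eventually_lt_nhds hvp
      exact this.filter_mono nhdsWithin_le_nhds
    obtain ⟨a, ⟨h7, h8⟩, h9⟩ := ((h5.and h6).and eventually_mem_nhdsWithin).exists
    exact ⟨a, h9, h8, h7⟩
  obtain ⟨a, ha0, havp, haF⟩ := ha
  obtain ⟨b, hb0, hbvp, hbF⟩ := hb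
  have hab : a < b := by
    by_contra h
    push_neg at h
    rcases eq_or_lt_of_le h with h' | h'
    · rw [h'] at hbF; linarith
    · have := hanti b a hb0 havp h'; linarith
  have hcontI : ContinuousOn F (Set.Icc a b) := fun x hx =>
    (hcont x (ne_of_gt (lt_of_lt_of_le ha0 hx.1))).continuousWithinAt
  have hmem : up ^ 2 ∈ Set.Icc (F b) (F a) := ⟨le_of_lt hbF, le_of_lt haF⟩
  obtain ⟨vm, hvm, hvmF⟩ := intermediate_value_Icc' (le_of_lt hab) hcontI hmem
  refine ⟨vm, ⟨lt_of_lt_of_le ha0 hvm.1, lt_of_le_of_lt hvm.2 hbvp, (heq vm).2 hvmF⟩, ?_⟩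
  rintro y ⟨hy0, hyvp, hyeq⟩
  have hyF : F y = up ^ 2 := (heq y).1 hyeq
  have hvm0 : 0 < vm := lt_of_lt_of_le ha0 hvm.1
  have hvmvp : vm < vp := lt_of_le_of_lt hvm.2 hbvp
  rcases lt_trichotomy y vm with h | h | h
  · have := hanti y vm hy0 hvmvp h; rw [hyF, hvmF] at this; linarith
  · exact h
  · have := hanti vm y hvm0 hyvp h; rw [hyF, hvmF] at this; linarith
end
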